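/- Let p = 2q+1 with p, q primes, a₀ a primitive root mod p, gcd(a₀b₀, q)=1, and a₀^n ≡ b₀ (mod p) with 0 ≤ n < p−1. If m is the unique residue modulo q with a₀^(m·φ(q)) ≡ b₀^(φ(q)) (mod pq), then n ≡ m (mod q), i.e., n = m or n = m + q. -/

import Mathlib

theorem stmt_14 (p q : ℕ) (hp : p.Prime) (hq : q.Prime) (hpq : p = 2 * q + 1)
    (a₀ b₀ n m : ℕ) (hroot : IsPrimitiveRoot (a₀ : ZMod p) (p - 1))
    (hab : Nat.Coprime (a₀ * b₀) q)
    (hn : a₀ ^ n ≡ b₀ [MOD p]) (hnlt : n < p - 1) (hm : m < q)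
    (hmeq : a₀ ^ (m * q.totient) ≡ b₀ ^ q.totient [MOD p * q]) :
    n ≡ m [MOD q] ∧ (n = m ∨ n = m + q) := by
  have hq2 : 1 < q := hq.one_lt
  have hp1 : p - 1 = 2 * q := by omega
  have h1 : a₀ ^ (m * q.totient) ≡ b₀ ^ q.totient [MOD p] := hmeq.of_mul_right q
  have h2 : b₀ ^ q.totient ≡ a₀ ^ (n * q.totient) [MOD p] := by
    calc b₀ ^ q.totient ≡ (a₀ ^ n) ^ q.totient [MOD p] := (hn.pow _).symm
    _ = a₀ ^ (n * q.totient) := by rw [← pow_mul]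
  have h3 : a₀ ^ (m * q.totient) ≡ a₀ ^ (n * q.totient) [MOD p] := h1.trans h2
  have h4 : (a₀ : ZMod p) ^ (m * q.totient) = (a₀ : ZMod p) ^ (n * q.totient) := by
    have := (ZMod.natCast_eq_natCast_iff _ _ _).mpr h3
    push_cast at this
    exact this
  obtain ⟨u, hu⟩ := hroot.isUnit (by omega : p - 1 ≠ 0)
  have hu4 : u ^ (m * q.totient) = u ^ (n * q.totient) := by
    apply Units.ext
    push_cast [hu]
    exact h4
  have hord : orderOf u = p - 1 := by
    rw [← orderOf_units, hu]
    exact hroot.eq_orderOf.symm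
  have h5 : m * q.totient ≡ n * q.totient [MOD p - 1] := by
    rw [← hord]
    exact pow_eq_pow_iff_modEq.mp hu4
  have h6 : m * q.totient ≡ n * q.totient [MOD q] := by
    rw [hp1] at h5; exact h5.of_mul_left 2
  have hcop : Nat.Coprime q q.totient := by
    rw [Nat.totient_prime hq]
    exact (Nat.Prime.coprime_iff_not_dvd hq).mpr
      (fun h => by have := Nat.le_of_dvd (by omega) h; omega)
  have h7 : m ≡ n [MOD q] := Nat.ModEq.cancel_right_of_coprime hcop h6
  have hnm : n % q = m := by
    have h8 : n % q = m % q := h7.symm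
    rw [h8, Nat.mod_eq_of_lt hm]
  refine ⟨h7.symm, ?_⟩
  rcases Nat.lt_or_ge n q with h | h
  · left; rw [← hnm, Nat.mod_eq_of_lt h]
  · right
    have h9 : n % q = (n - q) % q := (Nat.mod_eq_sub_mod h).symm ▸ rfl
    have h10 : (n - q) % q = n - q := Nat.mod_eq_of_lt (by omega)
    omega
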